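/- In the Galerkin setting (without the matrix D and without forcing): let M : ℝ → Mat_n(ℝ) be continuous and T-periodic with ⟨M(t)ξ, ξ⟩ = 0 for all t ∈ ℝ and ξ ∈ ℝⁿ. If (a, z) : ℝ → ℝⁿ × ℝ is continuously differentiable, T-periodic (a(t+T) = a(t), z(t+T) = z(t)) and satisfies A a'(t) − M(t) a(t) + (k/ρ) z(t) β + B a(t) = 0 and z'(t) = ⟨β, a(t)⟩ for all t ∈ ℝ, then a ≡ 0 and z ≡ 0. -/

import Mathlib

open MeasureTheory Matrix

/-- In the Galerkin setting, the homogeneous linearized Galerkin system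
`A a' − M(t) a + (k/ρ) z β + B a = 0`, `z' = ⟨β, a⟩` (with `⟨M(t)ξ, ξ⟩ = 0`) has only the
trivial `T`-periodic solution. -/
theorem homogeneous_linearized_galerkin_trivial
    (n : ℕ) (hn : 0 < n) (T ρ m k : ℝ)
    (hT : 0 < T) (hρ : 0 < ρ) (hm : 0 < m) (hk : 0 < k)
    (β : Fin n → ℝ) (hβ : 0 < β ⟨0, hn⟩)
    (B : Matrix (Fin n) (Fin n) ℝ) (hB : B.PosDef)
    (M : ℝ → Matrix (Fin n) (Fin n) ℝ)
    (hMcont : Continuous M) (hMper : ∀ t, M (t + T) = M t)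
    (hM0 : ∀ t ξ, (M t).mulVec ξ ⬝ᵥ ξ = 0)
    (a : ℝ → Fin n → ℝ) (z : ℝ → ℝ)
    (ha : ContDiff ℝ 1 a) (hz : ContDiff ℝ 1 z)
    (haper : ∀ t, a (t + T) = a t) (hzper : ∀ t, z (t + T) = z t)
    (heq : ∀ t,
      ((1 : Matrix (Fin n) (Fin n) ℝ) + (m / ρ) • vecMulVec β β).mulVec (deriv a t)
        - (M t).mulVec (a t) + ((k / ρ) * z t) • β + B.mulVec (a t) = 0)
    (heq' : ∀ t, deriv z t = β ⬝ᵥ a t) :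
    (∀ t, a t = 0) ∧ (∀ t, z t = 0) := by
  set A : Matrix (Fin n) (Fin n) ℝ :=
    (1 : Matrix (Fin n) (Fin n) ℝ) + (m / ρ) • vecMulVec β β with hA
  -- symmetry of A
  have hAT : Aᵀ = A := by
    rw [hA]
    ext i j
    simp [Matrix.transpose_apply, Matrix.add_apply, Matrix.one_apply, Matrix.smul_apply,
      Matrix.vecMulVec_apply, eq_comm, mul_comm]
  have hAsymm : ∀ x y : Fin n → ℝ, (A *ᵥ x) ⬝ᵥ y = (A *ᵥ y) ⬝ᵥ x := by
    intro x y
    rw [dotProduct_comm, dotProduct_mulVec, ← Matrix.vecMul_transpose, hAT,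
      ← Matrix.mulVec_transpose, hAT]
  -- the energy
  set E : ℝ → ℝ := fun t => (k / ρ) * z t ^ 2 + (A *ᵥ a t) ⬝ᵥ a t with hE
  have hadiff : ∀ t, HasDerivAt a (deriv a t) t := fun t =>
    ((ha.differentiable one_ne_zero) t).hasDerivAt
  have hzdiff : ∀ t, HasDerivAt z (deriv z t) t := fun t =>
    ((hz.differentiable one_ne_zero) t).hasDerivAt
  -- derivative of E
  have hE' : ∀ t, HasDerivAt E (-2 * ((B *ᵥ a t) ⬝ᵥ a t)) t := by
    intro t
    have hai : ∀ i, HasDerivAt (fun s => a s i) (deriv a t i) t := fun i =>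
      hasDerivAt_pi.mp (hadiff t) i
    have h1 : HasDerivAt (fun s => (k / ρ) * z s ^ 2)
        ((k / ρ) * (2 * z t ^ 1 * deriv z t)) t :=
      ((hzdiff t).pow 2).const_mul _
    have h2 : HasDerivAt (fun s => (A *ᵥ a s) ⬝ᵥ a s)
        (∑ i, ((∑ j, A i j * deriv a t j) * a t i
          + (∑ j, A i j * a t j) * deriv a t i)) t := by
      have : ∀ i : Fin n, HasDerivAt (fun s => (∑ j, A i j * a s j) * a s i)
          ((∑ j, A i j * deriv a t j) * a t i + (∑ j, A i j * a t j) * deriv a t i) t := by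
        intro i
        exact (HasDerivAt.fun_sum (fun j _ => (hai j).const_mul (A i j))).mul (hai i)
      have hs := HasDerivAt.fun_sum (fun i (_ : i ∈ Finset.univ) => this i)
      exact hs
    have hsum := h1.add h2
    -- identify the derivative value
    have hkey : (A *ᵥ deriv a t) ⬝ᵥ a t
        = -((k / ρ) * z t * (β ⬝ᵥ a t)) - (B *ᵥ a t) ⬝ᵥ a t := by
      have h := congrArg (fun v => v ⬝ᵥ a t) (heq t)
      simp only [add_dotProduct, sub_dotProduct, smul_dotProduct, zero_dotProduct,
        smul_eq_mul, hM0] at h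
      linarith
    have hident : (k / ρ) * (2 * z t ^ 1 * deriv z t)
        + (∑ i, ((∑ j, A i j * deriv a t j) * a t i
          + (∑ j, A i j * a t j) * deriv a t i))
        = -2 * ((B *ᵥ a t) ⬝ᵥ a t) := by
      have e1 : (∑ i, (∑ j, A i j * deriv a t j) * a t i) = (A *ᵥ deriv a t) ⬝ᵥ a t := by
        simp [Matrix.mulVec, dotProduct]
      have e2 : (∑ i, (∑ j, A i j * a t j) * deriv a t i) = (A *ᵥ a t) ⬝ᵥ deriv a t := by
        simp [Matrix.mulVec, dotProduct]
      rw [Finset.sum_add_distrib, e1, e2, hAsymm (a t) (deriv a t), hkey, heq' t]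
      ring
    rw [hident] at hsum
    exact hsum
  have hEdiff : Differentiable ℝ E := fun t => (hE' t).differentiableAt
  have hEderiv : ∀ t, deriv E t = -2 * ((B *ᵥ a t) ⬝ᵥ a t) := fun t => (hE' t).deriv
  -- B is positive semidefinite on the diagonal
  have hBq : ∀ x : Fin n → ℝ, 0 ≤ (B *ᵥ x) ⬝ᵥ x := by
    intro x
    rcases eq_or_ne x 0 with hx | hx
    · simp [hx]
    · have := hB.dotProduct_mulVec_pos hx
      rw [star_trivial] at this
      rw [dotProduct_comm]
      linarith
  have hEnonpos : ∀ t, deriv E t ≤ 0 := by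
    intro t
    rw [hEderiv t]
    nlinarith [hBq (a t)]
  have hanti : Antitone E := antitone_of_deriv_nonpos hEdiff hEnonpos
  have hper : Function.Periodic E T := by
    intro t
    simp only [hE, haper, hzper]
  -- E is constant
  have hconst : ∀ s t : ℝ, E s = E t := by
    have key : ∀ s t : ℝ, s ≤ t → E s = E t := by
      intro s t hst
      obtain ⟨N, hN⟩ := exists_nat_ge ((t - s) / T)
      have hNT : t ≤ s + N * T := by
        have := (div_le_iff₀ hT).mp hN
        linarith
      have h1 : E t ≤ E s := hanti hst
      have h2 : E (s + N * T) ≤ E t := hanti hNT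
      have h3 : E (s + N * T) = E s := (hper.nat_mul N) s
      linarith
    intro s t
    rcases le_total s t with h | h
    · exact key s t h
    · exact (key t s h).symm
  have hEc : E = fun _ => E 0 := funext fun t => hconst t 0
  have hderiv0 : ∀ t, deriv E t = 0 := by
    intro t
    rw [hEc]
    simp
  -- a ≡ 0
  have ha0 : ∀ t, a t = 0 := by
    intro t
    by_contra hne
    have hpos := hB.dotProduct_mulVec_pos hne
    rw [star_trivial] at hpos
    have := hEderiv t
    rw [hderiv0 t] at this
    rw [dotProduct_comm] at this
    linarith
  refine ⟨ha0, fun t => ?_⟩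
  -- z ≡ 0
  have hda : deriv a t = 0 := by
    have : a = fun _ => (0 : Fin n → ℝ) := funext ha0
    rw [this, deriv_const]
  have h := heq t
  rw [hda, ha0 t] at h
  simp only [Matrix.mulVec_zero, sub_zero, zero_add, add_zero] at h
  have h0 := congrFun h ⟨0, hn⟩
  simp only [Pi.smul_apply, smul_eq_mul, Pi.zero_apply] at h0
  rcases mul_eq_zero.mp h0 with h1 | h1
  · rcases mul_eq_zero.mp h1 with h2 | h2
    · exact absurd h2 (by positivity)
    · exact h2
  · exact absurd h1 (ne_of_gt hβ)
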